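/- arXiv:1212.3596 — 2 statements merged into one kernel-verified Lean document; each statement's English description precedes it below -/
import Mathlib

section
/- The first homology of the configuration space of k unordered points in S² is cyclic of order 2k−2: H₁(C_k(S²); ℤ) ≅ ℤ/(2k−2)ℤ for k ≥ 2. Equivalently, the abelianization of the sphere braid group Br_k(S²) is ℤ/(2k−2)ℤ. -/
/-- The relations of the sphere braid group `Br_k(S²)` on generators `σ₁, …, σ_{k-1}`
(indexed by `Fin (k-1)`): the braid relations `σᵢσ_{i+1}σᵢ = σ_{i+1}σᵢσ_{i+1}`, the
commuting relations `σᵢσⱼ = σⱼσᵢ` for `|i - j| ≥ 2`, and the sphere relation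
`σ₁σ₂⋯σ_{k-1}σ_{k-1}⋯σ₂σ₁ = 1`. -/
def sphereBraidRels (k : ℕ) : Set (FreeGroup (Fin (k - 1))) :=
  {r | ∃ i j : Fin (k - 1), j.val = i.val + 1 ∧
      r = FreeGroup.of i * FreeGroup.of j * FreeGroup.of i *
        (FreeGroup.of j * FreeGroup.of i * FreeGroup.of j)⁻¹} ∪
  {r | ∃ i j : Fin (k - 1), (i.val + 2 ≤ j.val ∨ j.val + 2 ≤ i.val) ∧
      r = FreeGroup.of i * FreeGroup.of j * (FreeGroup.of j * FreeGroup.of i)⁻¹} ∪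
  {r | r = (List.ofFn fun i : Fin (k - 1) => FreeGroup.of i).prod *
      (List.ofFn fun i : Fin (k - 1) => FreeGroup.of i).reverse.prod}

/-- The sphere braid group `Br_k(S²)`, i.e. the fundamental group of the configuration
space `C_k(S²)` of `k` unordered points in `S²`. -/
def SphereBraidGroup (k : ℕ) : Type := PresentedGroup (sphereBraidRels k)

instance (k : ℕ) : Group (SphereBraidGroup k) :=
  inferInstanceAs (Group (PresentedGroup (sphereBraidRels k)))

section Aux

variable (k : ℕ)

/-- image of the `i`-th generator in the abelianization -/
noncomputable def sbGen (i : Fin (k - 1)) :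
    Abelianization (PresentedGroup (sphereBraidRels k)) :=
  Abelianization.of (PresentedGroup.of i)

lemma sb_rel_eq_one {r : FreeGroup (Fin (k - 1))} (hr : r ∈ sphereBraidRels k) :
    PresentedGroup.mk (sphereBraidRels k) r = 1 :=
  (QuotientGroup.eq_one_iff r).mpr (Subgroup.subset_normalClosure hr)

lemma sbGen_succ (i j : Fin (k - 1)) (hij : j.val = i.val + 1) :
    sbGen k i = sbGen k j := by
  have hr : (FreeGroup.of i * FreeGroup.of j * FreeGroup.of i *
      (FreeGroup.of j * FreeGroup.of i * FreeGroup.of j)⁻¹ : FreeGroup (Fin (k-1)))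
      ∈ sphereBraidRels k := Or.inl (Or.inl ⟨i, j, hij, rfl⟩)
  have h1 := sb_rel_eq_one k hr
  simp only [map_mul, map_inv, mul_inv_eq_one] at h1
  have h2 := congrArg Abelianization.of h1
  simp only [map_mul] at h2
  have h3 : sbGen k i * sbGen k j * sbGen k i = sbGen k j * sbGen k i * sbGen k j := h2
  refine mul_left_cancel (a := sbGen k i * sbGen k j) ?_
  rw [show sbGen k i * sbGen k j * sbGen k i = sbGen k j * sbGen k i * sbGen k j from h3,
    mul_comm (sbGen k j) (sbGen k i)]

lemma sbGen_eq (hk : 2 ≤ k) (i : Fin (k - 1)) : sbGen k i = sbGen k ⟨0, by omega⟩ := by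
  obtain ⟨m, hm⟩ := i
  induction m with
  | zero => rfl
  | succ p ih =>
    have hp : p < k - 1 := by omega
    rw [← sbGen_succ k ⟨p, hp⟩ ⟨p+1, hm⟩ rfl]
    exact ih hp

lemma sbGen_pow (hk : 2 ≤ k) : (sbGen k ⟨0, by omega⟩) ^ (2 * k - 2) = 1 := by
  have hr : ((List.ofFn fun i : Fin (k - 1) => FreeGroup.of i).prod *
      (List.ofFn fun i : Fin (k - 1) => FreeGroup.of i).reverse.prod : FreeGroup (Fin (k-1)))
      ∈ sphereBraidRels k := Or.inr rfl
  have h1 := congrArg Abelianization.of (sb_rel_eq_one k hr)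
  rw [map_one, map_mul] at h1
  set F : FreeGroup (Fin (k-1)) →* Abelianization (PresentedGroup (sphereBraidRels k)) :=
    Abelianization.of.comp (PresentedGroup.mk (sphereBraidRels k)) with hF
  have h1' : F ((List.ofFn fun i : Fin (k - 1) => FreeGroup.of i).prod) *
      F ((List.ofFn fun i : Fin (k - 1) => FreeGroup.of i).reverse.prod) = 1 := h1
  rw [map_list_prod, map_list_prod, List.map_reverse, List.map_ofFn] at h1'
  have hc : F ∘ (fun i : Fin (k-1) => FreeGroup.of i) =
      fun _ : Fin (k-1) => sbGen k ⟨0, by omega⟩ := by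
    funext i
    exact sbGen_eq k hk i
  rw [hc, List.ofFn_const, List.prod_reverse, List.prod_replicate, ← pow_add] at h1'
  rwa [show 2 * k - 2 = (k - 1) + (k - 1) by omega]

end Aux

/-- The first homology of the configuration space of `k` unordered points in `S²` is
cyclic of order `2k - 2`: equivalently, the abelianization of the sphere braid group
`Br_k(S²)` (presented as above) is `ℤ/(2k-2)ℤ`, for `k ≥ 2`. -/
theorem abelianization_sphere_braid_group (k : ℕ) (hk : 2 ≤ k) :
    Nonempty (Abelianization (SphereBraidGroup k) ≃* Multiplicative (ZMod (2 * k - 2))) := by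
  haveI : NeZero (2 * k - 2) := ⟨by omega⟩
  set n := 2 * k - 2 with hn
  set i0 : Fin (k - 1) := ⟨0, by omega⟩ with hi0
  -- the forward map
  set f : Fin (k - 1) → Multiplicative (ZMod n) :=
    fun _ => Multiplicative.ofAdd (1 : ZMod n) with hf
  have hrels : ∀ r ∈ sphereBraidRels k, FreeGroup.lift f r = 1 := by
    intro r hr
    rcases hr with (⟨i, j, _, rfl⟩ | ⟨i, j, _, rfl⟩) | rfl
    · simp only [map_mul, map_inv, FreeGroup.lift_apply_of]
      simp only [hf]
      group
    · simp only [map_mul, map_inv, FreeGroup.lift_apply_of]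
      simp only [hf]
      group
    · rw [map_mul, map_list_prod, map_list_prod, List.map_reverse, List.map_ofFn]
      have hc : (FreeGroup.lift f) ∘ (fun i : Fin (k-1) => FreeGroup.of i) =
          fun _ : Fin (k-1) => Multiplicative.ofAdd (1 : ZMod n) := by
        funext i; simp [hf]
      rw [hc, List.ofFn_const, List.prod_reverse, List.prod_replicate, ← pow_add,
        show (k - 1) + (k - 1) = n by omega, ← ofAdd_nsmul]
      simp
  set φ' : PresentedGroup (sphereBraidRels k) →* Multiplicative (ZMod n) :=
    PresentedGroup.toGroup hrels with hφ'
  set φ : Abelianization (PresentedGroup (sphereBraidRels k)) →* Multiplicative (ZMod n) :=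
    Abelianization.lift φ' with hφ
  -- the backward map
  set x : Additive (Abelianization (PresentedGroup (sphereBraidRels k))) :=
    Additive.ofMul (sbGen k i0) with hx
  have hxn : (zmultiplesHom _ x) (n : ℤ) = 0 := by
    show (n : ℤ) • x = 0
    rw [hx, ← ofMul_zpow]
    norm_cast
    rw [sbGen_pow k hk]
    rfl
  set ψ' : ZMod n →+ Additive (Abelianization (PresentedGroup (sphereBraidRels k))) :=
    ZMod.lift n ⟨zmultiplesHom _ x, hxn⟩ with hψ'
  set ψ : Multiplicative (ZMod n) →* Abelianization (PresentedGroup (sphereBraidRels k)) :=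
    ψ'.toMultiplicativeLeft with hψ
  have hψ1 : ψ (Multiplicative.ofAdd (1 : ZMod n)) = sbGen k i0 := by
    have : ((1 : ℤ) : ZMod n) = (1 : ZMod n) := by norm_cast
    show Additive.toMul (ψ' (1 : ZMod n)) = sbGen k i0
    rw [← this, hψ', ZMod.lift_coe]
    show Additive.toMul ((1 : ℤ) • x) = sbGen k i0
    simp [hx]
  have hφgen : ∀ i : Fin (k-1), φ (sbGen k i) = Multiplicative.ofAdd (1 : ZMod n) := by
    intro i
    show φ (Abelianization.of (PresentedGroup.of i)) = _
    rw [hφ, Abelianization.lift_apply_of, hφ', PresentedGroup.toGroup.of]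
  have h1 : ψ.comp φ = MonoidHom.id _ := by
    apply Abelianization.hom_ext
    apply PresentedGroup.ext
    intro i
    show ψ (φ (Abelianization.of (PresentedGroup.of i))) = Abelianization.of (PresentedGroup.of i)
    rw [show Abelianization.of (PresentedGroup.of i) = sbGen k i from rfl, hφgen i, hψ1,
      sbGen_eq k hk i]
  have h2 : φ.comp ψ = MonoidHom.id _ := by
    ext z
    show φ (ψ z) = z
    obtain ⟨m, hm⟩ : ∃ m : ℕ, ((m : ZMod n)) = Multiplicative.toAdd z :=
      ⟨ZMod.val (Multiplicative.toAdd z), ZMod.natCast_rightInverse _⟩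
    have hz : z = (Multiplicative.ofAdd (1 : ZMod n)) ^ m := by
      rw [← ofAdd_nsmul]
      rw [show (m • (1 : ZMod n)) = (m : ZMod n) by simp, hm]
      rfl
    rw [hz, map_pow, map_pow, hψ1, hφgen]
  exact ⟨MonoidHom.toMulEquiv φ ψ h1 h2⟩
end

section
/- Abelianization computation: for k ≥ 2, the abelianization of the group presented by generators x₁,…,x_{k−1} with braid and commuting relations together with the relation x₁x₂⋯x_{k−1}x_{k−1}⋯x₂x₁ = 1 is generated by the common image x of all x_i subject to x^{2k−2} = 1; hence it is isomorphic to ZMod (2k−2). -/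
/-- Abelianization computation: for `k ≥ 2`, the abelianization of the group presented by
the sphere braid relations is generated by the common image `x` of all the generators
`xᵢ`, subject to `x ^ (2k-2) = 1`; hence it is isomorphic to `ZMod (2k - 2)`. -/
theorem abelianization_of_sphere_braid_presentation (k : ℕ) (hk : 2 ≤ k) :
    (∃ x : Abelianization (PresentedGroup (sphereBraidRels k)),
      (∀ i : Fin (k - 1), Abelianization.of (PresentedGroup.of i) = x) ∧
      Subgroup.zpowers x = ⊤ ∧ x ^ (2 * k - 2) = 1) ∧
    Nonempty (Abelianization (PresentedGroup (sphereBraidRels k)) ≃*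
      Multiplicative (ZMod (2 * k - 2))) := by
  haveI : NeZero (2 * k - 2) := ⟨by omega⟩
  set n : ℕ := 2 * k - 2 with hn
  set G := PresentedGroup (sphereBraidRels k) with hG
  set A := Abelianization G with hA
  -- the composite hom `FreeGroup (Fin (k-1)) → A`
  set φ : FreeGroup (Fin (k - 1)) →* A :=
    (Abelianization.of : G →* A).comp (PresentedGroup.mk (sphereBraidRels k)) with hφ
  have hrel1 : ∀ r ∈ sphereBraidRels k, φ r = 1 := by
    intro r hr
    have hmem : r ∈ Subgroup.normalClosure (sphereBraidRels k) :=
      Subgroup.subset_normalClosure hr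
    have : (PresentedGroup.mk (sphereBraidRels k)) r = 1 :=
      (QuotientGroup.eq_one_iff r).mpr hmem
    simp [hφ, MonoidHom.comp_apply, this]
  set y : Fin (k - 1) → A := fun i => Abelianization.of (PresentedGroup.of i) with hy
  have hφof : ∀ i : Fin (k - 1), φ (FreeGroup.of i) = y i := fun i => rfl
  -- consecutive generators agree in the abelianization
  have hcons : ∀ i j : Fin (k - 1), j.val = i.val + 1 → y i = y j := by
    intro i j hij
    have hr : (FreeGroup.of i * FreeGroup.of j * FreeGroup.of i *
        (FreeGroup.of j * FreeGroup.of i * FreeGroup.of j)⁻¹) ∈ sphereBraidRels k :=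
      Or.inl (Or.inl ⟨i, j, hij, rfl⟩)
    have h1 := hrel1 _ hr
    simp only [map_mul, map_inv, hφof] at h1
    have heq : y i * y j * y i = y j * y i * y j := by
      have := mul_inv_eq_one.mp h1
      simpa using this
    rw [mul_comm (y i) (y j)] at heq
    exact mul_left_cancel heq
  have h0lt : 0 < k - 1 := by omega
  set x : A := y ⟨0, h0lt⟩ with hx
  have hall : ∀ m (hm : m < k - 1), y ⟨m, hm⟩ = x := by
    intro m
    induction m with
    | zero => intro hm; rfl
    | succ p ih =>
      intro hm
      have hp : p < k - 1 := by omega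
      rw [← hcons ⟨p, hp⟩ ⟨p + 1, hm⟩ rfl]
      exact ih hp
  have hyx : ∀ i : Fin (k - 1), y i = x := fun i => by
    have := hall i.val i.isLt
    simpa using this
  -- the sphere relation gives x ^ n = 1
  have hxn : x ^ n = 1 := by
    have hr : ((List.ofFn fun i : Fin (k - 1) => FreeGroup.of i).prod *
        (List.ofFn fun i : Fin (k - 1) => FreeGroup.of i).reverse.prod) ∈
        sphereBraidRels k := Or.inr rfl
    have h1 := hrel1 _ hr
    rw [map_mul, map_list_prod, map_list_prod] at h1
    have hmap : (List.ofFn fun i : Fin (k - 1) => FreeGroup.of i).map φ =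
        List.ofFn fun i : Fin (k - 1) => y i := by
      rw [List.map_ofFn]; rfl
    rw [List.map_reverse, hmap, List.prod_reverse] at h1
    have hprod : (List.ofFn fun i : Fin (k - 1) => y i).prod = x ^ (k - 1) := by
      rw [List.prod_ofFn]
      simp only [hyx]
      simp [Finset.prod_const, Finset.card_univ]
    rw [hprod, ← pow_add] at h1
    have : k - 1 + (k - 1) = n := by omega
    rwa [this] at h1
  -- everything is a power of x
  have hzpow : ∀ a : A, a ∈ Subgroup.zpowers x := by
    intro a
    obtain ⟨g, rfl⟩ := QuotientGroup.mk_surjective a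
    show Abelianization.of g ∈ Subgroup.zpowers x
    refine PresentedGroup.generated_by _
      ((Subgroup.zpowers x).comap (Abelianization.of : G →* A)) ?_ g
    intro j
    simp only [Subgroup.mem_comap]
    rw [show (Abelianization.of (PresentedGroup.of j) : A) = x from hyx j]
    exact Subgroup.mem_zpowers x
  have hgen : Subgroup.zpowers x = ⊤ := by
    rw [Subgroup.eq_top_iff']; exact hzpow
  -- forward homomorphism to ZMod n
  have hrels2 : ∀ r ∈ sphereBraidRels k,
      FreeGroup.lift (fun _ : Fin (k - 1) => Multiplicative.ofAdd (1 : ZMod n)) r = 1 := by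
    intro r hr
    rcases hr with (⟨i, j, hij, rfl⟩ | ⟨i, j, hij, rfl⟩) | rfl
    · simp only [map_mul, map_inv, FreeGroup.lift_apply_of]; group
    · simp only [map_mul, map_inv, FreeGroup.lift_apply_of]; group
    · rw [map_mul, map_list_prod, map_list_prod, List.map_reverse, List.prod_reverse,
        List.map_ofFn]
      have : (List.ofFn ((FreeGroup.lift fun _ : Fin (k - 1) =>
          Multiplicative.ofAdd (1 : ZMod n)) ∘ fun i : Fin (k - 1) => FreeGroup.of i)).prod =
          Multiplicative.ofAdd (1 : ZMod n) ^ (k - 1) := by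
        rw [List.prod_ofFn]
        simp [Finset.prod_const, Finset.card_univ]
      rw [this, ← pow_add]
      have h2 : k - 1 + (k - 1) = n := by omega
      rw [h2]
      have h3 : (n : ℕ) • (1 : ZMod n) = 0 := by
        simp [nsmul_eq_mul, ZMod.natCast_self]
      rw [← ofAdd_nsmul, h3, ofAdd_zero]
  set ψ : A →* Multiplicative (ZMod n) :=
    Abelianization.lift (PresentedGroup.toGroup hrels2) with hψ
  have hψx : ψ x = Multiplicative.ofAdd (1 : ZMod n) := by
    rw [hx, hy]
    simp only [hψ]
    rw [Abelianization.lift_apply_of]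
    exact PresentedGroup.toGroup.of hrels2
  -- reverse homomorphism
  have hzero : (zmultiplesHom (Additive A) (Additive.ofMul x)) (n : ℤ) = 0 := by
    show (n : ℤ) • Additive.ofMul x = 0
    rw [← ofMul_zpow, zpow_natCast, hxn]
    rfl
  set ιa : ZMod n →+ Additive A :=
    ZMod.lift n ⟨zmultiplesHom (Additive A) (Additive.ofMul x), hzero⟩ with hιa
  set ι : Multiplicative (ZMod n) →* A := AddMonoidHom.toMultiplicativeLeft ιa with hι
  have hι_int : ∀ m : ℤ, ι (Multiplicative.ofAdd ((m : ℤ) : ZMod n)) = x ^ m := by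
    intro m
    show Additive.toMul (ιa ((m : ℤ) : ZMod n)) = x ^ m
    rw [hιa, ZMod.lift_coe]
    show Additive.toMul ((m : ℤ) • Additive.ofMul x) = x ^ m
    rw [← ofMul_zpow]
    rfl
  have hcomp1 : ∀ a : A, ι (ψ a) = a := by
    intro a
    obtain ⟨m, rfl⟩ := hzpow a
    rw [map_zpow, hψx]
    have : (Multiplicative.ofAdd (1 : ZMod n)) ^ m =
        Multiplicative.ofAdd ((m : ℤ) : ZMod n) := by
      simp [← ofAdd_zsmul, zsmul_one]
    rw [this, hι_int]
  have hcomp2 : ∀ b : Multiplicative (ZMod n), ψ (ι b) = b := by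
    intro b
    set v : ℕ := (Multiplicative.toAdd b).val with hv
    have hb : b = Multiplicative.ofAdd (((v : ℤ) : ZMod n)) := by
      rw [hv]
      push_cast
      rw [ZMod.natCast_rightInverse (Multiplicative.toAdd b)]
      exact (ofAdd_toAdd b).symm
    rw [hb, hι_int, map_zpow, hψx]
    rw [← ofAdd_zsmul, zsmul_one]
  have hiso : Nonempty (A ≃* Multiplicative (ZMod n)) := by
    exact ⟨MulEquiv.ofBijective ψ
      ⟨Function.LeftInverse.injective hcomp1, fun b => ⟨ι b, hcomp2 b⟩⟩⟩
  exact ⟨⟨x, hyx, hgen, hxn⟩, hiso⟩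
end
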